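/- Let ℓ be a prime and r ≥ 1 an integer. Take v₀ = 0 ∈ (ℤ/ℓ^rℤ)² and M₀ = I ∈ M₂(ℤ/ℓ^rℤ). Then the sequence N_k(0,I)/ℓ^{6(k−r)} converges as k → ∞ and its limit equals ℓ²/(ℓ² + ℓ + 1). -/

import Mathlib

open Matrix Filter Topology

/-- `N_k(v₀, M₀)`: the number of pairs `(v, M) ∈ (ℤ/ℓ^kℤ)² × M₂(ℤ/ℓ^kℤ)` whose
reduction mod `ℓ^r` is `(v₀, M₀)` and such that `v` lies in the row space of `M - I`. -/
noncomputable def liftCount (ℓ r k : ℕ) (hrk : r ≤ k) (v₀ : Fin 2 → ZMod (ℓ ^ r))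
    (M₀ : Matrix (Fin 2) (Fin 2) (ZMod (ℓ ^ r))) : ℕ :=
  Nat.card {p : (Fin 2 → ZMod (ℓ ^ k)) × Matrix (Fin 2) (Fin 2) (ZMod (ℓ ^ k)) //
    (∀ i, ZMod.castHom (pow_dvd_pow ℓ hrk) (ZMod (ℓ ^ r)) (p.1 i) = v₀ i) ∧
    p.2.map (ZMod.castHom (pow_dvd_pow ℓ hrk) (ZMod (ℓ ^ r))) = M₀ ∧
    ∃ x : Fin 2 → ZMod (ℓ ^ k), x ᵥ* (p.2 - 1) = p.1}

namespace LCP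
section CRIT
variable {R : Type*} [CommRing R]

lemma exists_vecMul_iff (N : Matrix (Fin 2) (Fin 2) R) (w : Fin 2 → R) :
    (∃ x, x ᵥ* N = w) ↔ ∃ x0 x1 : R,
      x0 * N 0 0 + x1 * N 1 0 = w 0 ∧ x0 * N 0 1 + x1 * N 1 1 = w 1 := by
  constructor
  · rintro ⟨x, hx⟩
    refine ⟨x 0, x 1, ?_, ?_⟩
    · have := congrFun hx 0
      rwa [Matrix.vecMul, dotProduct, Fin.sum_univ_two] at this
    · have := congrFun hx 1
      rwa [Matrix.vecMul, dotProduct, Fin.sum_univ_two] at this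
  · rintro ⟨x0, x1, h0, h1⟩
    refine ⟨![x0, x1], ?_⟩
    funext k
    rw [Matrix.vecMul, dotProduct, Fin.sum_univ_two]
    fin_cases k <;> simpa using (by assumption)

lemma exists_dvd_of_vecMul (N : Matrix (Fin 2) (Fin 2) R) (w : Fin 2 → R)
    (h : ∃ x, x ᵥ* N = w) :
    N.det ∣ (N 0 0 * w 1 - N 0 1 * w 0) ∧ N.det ∣ (N 1 0 * w 1 - N 1 1 * w 0) := by
  rw [exists_vecMul_iff] at h
  obtain ⟨x0, x1, h0, h1⟩ := h
  rw [Matrix.det_fin_two]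
  constructor
  · exact ⟨x1, by rw [← h0, ← h1]; ring⟩
  · exact ⟨-x0, by rw [← h0, ← h1]; ring⟩

lemma exists_iff_unit_row0 (N : Matrix (Fin 2) (Fin 2) R) (w : Fin 2 → R)
    (h : IsUnit (N 0 0) ∨ IsUnit (N 0 1)) :
    (∃ x, x ᵥ* N = w) ↔ N.det ∣ (N 0 0 * w 1 - N 0 1 * w 0) := by
  constructor
  · exact fun hx => (exists_dvd_of_vecMul N w hx).1
  · rintro ⟨y, hy⟩
    rw [Matrix.det_fin_two] at hy
    rw [exists_vecMul_iff]
    rcases h with hu | hu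
    · obtain ⟨u, hu⟩ := hu
      refine ⟨↑u⁻¹ * (w 0 - y * N 1 0), y, ?_, ?_⟩
      · rw [← hu]
        have h2 : (↑u⁻¹ : R) * ↑u = 1 := u.inv_mul
        linear_combination (w 0 - y * N 1 0) * h2
      · have h2 : (↑u⁻¹ : R) * ↑u = 1 := u.inv_mul
        rw [← hu] at hy
        try simp only [← hu]
        linear_combination (-(↑u⁻¹ : R)) * hy + (w 1 - y * N 1 1) * h2
    · obtain ⟨u, hu⟩ := hu
      refine ⟨↑u⁻¹ * (w 1 - y * N 1 1), y, ?_, ?_⟩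
      · have h2 : (↑u⁻¹ : R) * ↑u = 1 := u.inv_mul
        rw [← hu] at hy
        try simp only [← hu]
        linear_combination (↑u⁻¹ : R) * hy + (w 0 - y * N 1 0) * h2
      · rw [← hu]
        have h2 : (↑u⁻¹ : R) * ↑u = 1 := u.inv_mul
        linear_combination (w 1 - y * N 1 1) * h2

lemma exists_iff_unit_row1 (N : Matrix (Fin 2) (Fin 2) R) (w : Fin 2 → R)
    (h : IsUnit (N 1 0) ∨ IsUnit (N 1 1)) :
    (∃ x, x ᵥ* N = w) ↔ N.det ∣ (N 1 0 * w 1 - N 1 1 * w 0) := by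
  constructor
  · exact fun hx => (exists_dvd_of_vecMul N w hx).2
  · rintro ⟨y, hy⟩
    rw [Matrix.det_fin_two] at hy
    rw [exists_vecMul_iff]
    rcases h with hu | hu
    · obtain ⟨u, hu⟩ := hu
      refine ⟨-y, ↑u⁻¹ * (w 0 + y * N 0 0), ?_, ?_⟩
      · rw [← hu]
        have h2 : (↑u⁻¹ : R) * ↑u = 1 := u.inv_mul
        linear_combination (w 0 + y * N 0 0) * h2
      · have h2 : (↑u⁻¹ : R) * ↑u = 1 := u.inv_mul
        rw [← hu] at hy
        try simp only [← hu]
        linear_combination (-(↑u⁻¹ : R)) * hy + (w 1 + y * N 0 1) * h2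
    · obtain ⟨u, hu⟩ := hu
      refine ⟨-y, ↑u⁻¹ * (w 1 + y * N 0 1), ?_, ?_⟩
      · have h2 : (↑u⁻¹ : R) * ↑u = 1 := u.inv_mul
        rw [← hu] at hy
        try simp only [← hu]
        linear_combination (↑u⁻¹ : R) * hy + (w 0 + y * N 0 0) * h2
      · rw [← hu]
        have h2 : (↑u⁻¹ : R) * ↑u = 1 := u.inv_mul
        linear_combination (w 1 + y * N 0 1) * h2



end CRIT
section BASE



variable {ℓ : ℕ}

/-- scaling map `ZMod (ℓ^j) → ZMod (ℓ^(r+j))`, `a ↦ ℓ^r * a`. -/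
def phi (ℓ r j : ℕ) (a : ZMod (ℓ ^ j)) : ZMod (ℓ ^ (r + j)) :=
  ((ℓ ^ r * a.val : ℕ) : ZMod (ℓ ^ (r + j)))

lemma cast_pow_mul_congr (r j : ℕ) {X Y : ℕ} (h : X ≡ Y [MOD ℓ ^ j]) :
    ((ℓ ^ r * X : ℕ) : ZMod (ℓ ^ (r + j))) = ((ℓ ^ r * Y : ℕ) : ZMod (ℓ ^ (r + j))) := by
  refine (ZMod.natCast_eq_natCast_iff _ _ _).mpr ?_
  have := h.mul_left' (c := ℓ ^ r)
  rwa [← pow_add] at this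

lemma phi_natCast (r j : ℕ) (m : ℕ) :
    phi ℓ r j (m : ZMod (ℓ ^ j)) = ((ℓ ^ r * m : ℕ) : ZMod (ℓ ^ (r + j))) := by
  unfold phi
  exact cast_pow_mul_congr r j (by rw [ZMod.val_natCast]; exact Nat.mod_modEq m _)

variable (hℓ : ℓ.Prime)
include hℓ

lemma pow_neZero (j : ℕ) : NeZero (ℓ ^ j) := ⟨pow_ne_zero j hℓ.ne_zero⟩

lemma phi_injective (r j : ℕ) : Function.Injective (phi ℓ r j) := by
  haveI := pow_neZero hℓ j
  intro a b hab
  unfold phi at hab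
  have h2 := (ZMod.natCast_eq_natCast_iff _ _ _).mp hab
  rw [pow_add] at h2
  have := Nat.ModEq.mul_left_cancel' (pow_ne_zero r hℓ.ne_zero) h2
  have h3 : a.val = b.val :=
    ((Nat.mod_eq_of_lt a.val_lt).symm.trans ((Nat.mod_eq_of_lt b.val_lt) ▸ this)).trans rfl
  exact ZMod.val_injective _ h3

lemma phi_zero (r j : ℕ) : phi ℓ r j 0 = 0 := by
  unfold phi
  haveI := pow_neZero hℓ j
  simp

lemma phi_eq_zero_iff (r j : ℕ) (a : ZMod (ℓ ^ j)) : phi ℓ r j a = 0 ↔ a = 0 := by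
  constructor
  · intro h; exact phi_injective hℓ r j (h.trans (phi_zero hℓ r j).symm)
  · intro h; rw [h]; exact phi_zero hℓ r j

/-- reduction `ZMod (ℓ^(r+j)) → ZMod (ℓ^j)`. -/
def rho (ℓ r j : ℕ) : ZMod (ℓ ^ (r + j)) →+* ZMod (ℓ ^ j) :=
  ZMod.castHom (pow_dvd_pow ℓ (Nat.le_add_left j r)) _

lemma rho_apply (r j : ℕ) (x : ZMod (ℓ ^ (r + j))) :
    rho ℓ r j x = ((x.val : ℕ) : ZMod (ℓ ^ j)) := by
  haveI := pow_neZero hℓ (r + j)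
  rw [rho, ZMod.castHom_apply, ZMod.cast_eq_val]

lemma mul_phi (r j : ℕ) (c : ZMod (ℓ ^ (r + j))) (a : ZMod (ℓ ^ j)) :
    c * phi ℓ r j a = phi ℓ r j (rho ℓ r j c * a) := by
  haveI := pow_neZero hℓ j
  haveI := pow_neZero hℓ (r + j)
  have h1 : phi ℓ r j (rho ℓ r j c * a)
      = ((ℓ ^ r * (c.val * a.val) : ℕ) : ZMod (ℓ ^ (r + j))) := by
    unfold phi
    refine cast_pow_mul_congr r j ?_
    calc (rho ℓ r j c * a).val ≡ (rho ℓ r j c).val * a.val [MOD ℓ ^ j] := by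
          rw [ZMod.val_mul]; exact (Nat.mod_modEq _ _)
      _ ≡ c.val * a.val [MOD ℓ ^ j] := by
          refine Nat.ModEq.mul_right _ ?_
          rw [rho_apply hℓ, ZMod.val_natCast]
          exact Nat.mod_modEq _ _
  rw [h1]
  unfold phi
  push_cast
  rw [ZMod.natCast_zmod_val]
  ring

lemma phi_add (r j : ℕ) (a b : ZMod (ℓ ^ j)) :
    phi ℓ r j (a + b) = phi ℓ r j a + phi ℓ r j b := by
  haveI := pow_neZero hℓ j
  haveI := pow_neZero hℓ (r + j)
  unfold phi
  have : ((ℓ ^ r * (a + b).val : ℕ) : ZMod (ℓ ^ (r + j)))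
      = ((ℓ ^ r * (a.val + b.val) : ℕ) : ZMod (ℓ ^ (r + j))) := by
    refine cast_pow_mul_congr r j ?_
    rw [ZMod.val_add]; exact Nat.mod_modEq _ _
  rw [this]; push_cast; ring

/-- image of `phi` is the ideal of multiples of `ℓ^r`. -/
lemma phi_image (r j : ℕ) (y : ZMod (ℓ ^ (r + j))) :
    (ℓ : ZMod (ℓ ^ (r + j))) ^ r ∣ y ↔ ∃ a, phi ℓ r j a = y := by
  haveI := pow_neZero hℓ j
  haveI := pow_neZero hℓ (r + j)
  constructor
  · rintro ⟨g, rfl⟩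
    refine ⟨((g.val : ℕ) : ZMod (ℓ ^ j)), ?_⟩
    rw [phi_natCast, Nat.cast_mul, Nat.cast_pow, ZMod.natCast_zmod_val]
  · rintro ⟨a, rfl⟩
    unfold phi
    exact ⟨(a.val : ZMod (ℓ ^ (r + j))), by rw [Nat.cast_mul, Nat.cast_pow]⟩



/-- reduction to `ZMod (ℓ^r)`. -/
def pi' (ℓ r j : ℕ) : ZMod (ℓ ^ (r + j)) →+* ZMod (ℓ ^ r) :=
  ZMod.castHom (pow_dvd_pow ℓ (Nat.le_add_right r j)) _

lemma pi'_eq_zero_iff (r j : ℕ) (y : ZMod (ℓ ^ (r + j))) :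
    pi' ℓ r j y = 0 ↔ (ℓ : ZMod (ℓ ^ (r + j))) ^ r ∣ y := by
  haveI := pow_neZero hℓ (r + j)
  haveI := pow_neZero hℓ r
  rw [pi', ZMod.castHom_apply, ZMod.cast_eq_val, ZMod.natCast_eq_zero_iff]
  constructor
  · rintro ⟨m, hm⟩
    refine ⟨(m : ZMod (ℓ ^ (r + j))), ?_⟩
    rw [← ZMod.natCast_zmod_val y, hm]
    push_cast; ring
  · rintro ⟨g, rfl⟩
    have : ((ℓ : ZMod (ℓ ^ (r + j))) ^ r * g).val = (ℓ ^ r * g.val) % ℓ ^ (r + j) := by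
      conv_lhs => rw [show (ℓ : ZMod (ℓ ^ (r + j))) ^ r * g
        = ((ℓ ^ r * g.val : ℕ) : ZMod (ℓ ^ (r + j))) by push_cast; rw [ZMod.natCast_zmod_val]]
      rw [ZMod.val_natCast]
    rw [this, Nat.dvd_mod_iff (by exact pow_dvd_pow ℓ (Nat.le_add_right r j))]
    exact dvd_mul_right _ _



lemma dvd_iff_val_dvd {j : ℕ} (hj : 1 ≤ j) (x : ZMod (ℓ ^ j)) :
    (ℓ : ZMod (ℓ ^ j)) ∣ x ↔ ℓ ∣ x.val := by
  haveI := pow_neZero hℓ j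
  have hd : ℓ ∣ ℓ ^ j := dvd_pow_self ℓ (by omega)
  constructor
  · rintro ⟨g, rfl⟩
    have : ((ℓ : ZMod (ℓ ^ j)) * g).val = (ℓ * g.val) % ℓ ^ j := by
      conv_lhs => rw [show (ℓ : ZMod (ℓ ^ j)) * g = ((ℓ * g.val : ℕ) : ZMod (ℓ ^ j)) by
        push_cast; rw [ZMod.natCast_zmod_val]]
      rw [ZMod.val_natCast]
    rw [this, Nat.dvd_mod_iff hd]
    exact dvd_mul_right _ _
  · rintro ⟨m, hm⟩
    refine ⟨(m : ZMod (ℓ ^ j)), ?_⟩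
    rw [← ZMod.natCast_zmod_val x, hm]; push_cast; ring

lemma isUnit_iff_not_dvd {j : ℕ} (hj : 1 ≤ j) (x : ZMod (ℓ ^ j)) :
    IsUnit x ↔ ¬ (ℓ : ZMod (ℓ ^ j)) ∣ x := by
  haveI := pow_neZero hℓ j
  rw [dvd_iff_val_dvd hℓ hj]
  rw [← ZMod.natCast_zmod_val x, ZMod.isUnit_iff_coprime, ZMod.val_natCast,
    Nat.mod_eq_of_lt (ZMod.val_lt x)]
  rw [Nat.coprime_pow_right_iff (by omega), Nat.coprime_comm]
  exact hℓ.coprime_iff_not_dvd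

lemma not_isUnit_iff_dvd {j : ℕ} (hj : 1 ≤ j) (x : ZMod (ℓ ^ j)) :
    ¬ IsUnit x ↔ (ℓ : ZMod (ℓ ^ j)) ∣ x := by
  rw [isUnit_iff_not_dvd hℓ hj, not_not]

/-- the central counting quantity: number of pairs `(w, N)` with `w` in the row space of `N`. -/
noncomputable def pairCount (ℓ j : ℕ) : ℕ :=
  Nat.card {p : (Fin 2 → ZMod (ℓ ^ j)) × Matrix (Fin 2) (Fin 2) (ZMod (ℓ ^ j)) //
    ∃ x, x ᵥ* p.2 = p.1}

omit hℓ in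
lemma vecMul_map_phi (r j : ℕ) (x : Fin 2 → ZMod (ℓ ^ (r + j)))
    (N : Matrix (Fin 2) (Fin 2) (ZMod (ℓ ^ j))) (hℓ : ℓ.Prime) :
    x ᵥ* (N.map (phi ℓ r j)) = fun k => phi ℓ r j (((rho ℓ r j ∘ x) ᵥ* N) k) := by
  funext k
  have h1 : (x ᵥ* (N.map (phi ℓ r j))) k = ∑ i, x i * phi ℓ r j (N i k) := by
    rw [Matrix.vecMul, dotProduct]; rfl
  have h2 : ((rho ℓ r j ∘ x) ᵥ* N) k = ∑ i, rho ℓ r j (x i) * N i k := by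
    rw [Matrix.vecMul, dotProduct]; rfl
  rw [h1, h2, Fin.sum_univ_two, Fin.sum_univ_two, phi_add hℓ,
    mul_phi hℓ, mul_phi hℓ]

lemma rho_natCast_val (r j : ℕ) (a : ZMod (ℓ ^ j)) :
    rho ℓ r j ((a.val : ℕ) : ZMod (ℓ ^ (r + j))) = a := by
  haveI := pow_neZero hℓ j
  rw [map_natCast, ZMod.natCast_zmod_val]

lemma scale_card (r j : ℕ) :
    Nat.card {p : (Fin 2 → ZMod (ℓ ^ (r + j))) × Matrix (Fin 2) (Fin 2) (ZMod (ℓ ^ (r + j))) //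
      (∀ i k, (ℓ : ZMod (ℓ ^ (r + j))) ^ r ∣ p.2 i k) ∧ ∃ x, x ᵥ* p.2 = p.1}
    = pairCount ℓ j := by
  haveI := pow_neZero hℓ j
  haveI := pow_neZero hℓ (r + j)
  rw [pairCount]
  refine (Nat.card_eq_of_bijective ?_ ⟨?_, ?_⟩).symm
  · -- map from small to big
    rintro ⟨⟨w, N⟩, hx⟩
    refine ⟨⟨fun k => phi ℓ r j (w k), N.map (phi ℓ r j)⟩, ?_, ?_⟩
    · intro i k
      exact ((phi_image hℓ r j _).mpr ⟨N i k, rfl⟩)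
    · obtain ⟨x, hx⟩ := hx
      refine ⟨fun i => (((x i).val : ℕ) : ZMod (ℓ ^ (r + j))), ?_⟩
      rw [vecMul_map_phi r j _ N hℓ]
      funext k
      have : (rho ℓ r j ∘ fun i => (((x i).val : ℕ) : ZMod (ℓ ^ (r + j)))) = x := by
        funext i; exact rho_natCast_val hℓ r j (x i)
      rw [this, hx]
  · -- injective
    rintro ⟨⟨w, N⟩, h⟩ ⟨⟨w', N'⟩, h'⟩ heq
    simp only [Subtype.mk.injEq, Prod.mk.injEq] at heq
    obtain ⟨h1, h2⟩ := heq
    refine Subtype.ext (Prod.ext ?_ ?_)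
    · funext k
      exact phi_injective hℓ r j (congrFun h1 k)
    · ext i k
      exact phi_injective hℓ r j (congrFun (congrFun (congrArg Matrix.of.symm h2) i) k)
  · -- surjective
    rintro ⟨⟨v, A⟩, hdvd, x, hx⟩
    have hN : ∀ i k, ∃ b, phi ℓ r j b = A i k := fun i k => (phi_image hℓ r j _).mp (hdvd i k)
    choose N hNspec using fun i => hN i
    set NN : Matrix (Fin 2) (Fin 2) (ZMod (ℓ ^ j)) := Matrix.of N with hNN
    have hA : A = NN.map (phi ℓ r j) := by
      ext i k; exact (hNspec i k).symm
    set w : Fin 2 → ZMod (ℓ ^ j) := (rho ℓ r j ∘ x) ᵥ* NN with hw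
    refine ⟨⟨⟨w, NN⟩, ⟨rho ℓ r j ∘ x, rfl⟩⟩, ?_⟩
    refine Subtype.ext (Prod.ext ?_ ?_)
    · funext k
      have := congrFun hx k
      rw [hA, vecMul_map_phi r j x NN hℓ] at this
      exact this
    · exact hA.symm



end BASE
section CASES

/-- pairs (e,z) with e ∣ z -/
abbrev Pset (m : ℕ) := {q : ZMod m × ZMod m // q.1 ∣ q.2}
/-- pairs (e,z) with e a non-unit and e ∣ z -/
abbrev Pset' (m : ℕ) := {q : ZMod m × ZMod m // ¬ IsUnit q.1 ∧ q.1 ∣ q.2}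

lemma card_case1 (m : ℕ) :
    Nat.card {p : (Fin 2 → ZMod m) × Matrix (Fin 2) (Fin 2) (ZMod m) //
      IsUnit (p.2 0 0) ∧ ∃ x, x ᵥ* p.2 = p.1}
    = Nat.card ((ZMod m)ˣ × ZMod m × ZMod m × ZMod m × Pset m) := by
  refine (Nat.card_eq_of_bijective ?_ ⟨?_, ?_⟩).symm
  · rintro ⟨u, b, c, w0, ⟨⟨f, z⟩, hq⟩⟩
    refine ⟨(![w0, ↑u⁻¹ * (z + b * w0)], !![↑u, b; c, ↑u⁻¹ * (f + b * c)]), ?_, ?_⟩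
    · simpa using u.isUnit
    · rw [exists_iff_unit_row0 _ _ (Or.inl (by simpa using u.isUnit))]
      have hdet : Matrix.det !![(↑u : ZMod m), b; c, ↑u⁻¹ * (f + b * c)] = f := by
        rw [Matrix.det_fin_two_of, Units.mul_inv_cancel_left]; ring
      have hc0 : (!![(↑u : ZMod m), b; c, ↑u⁻¹ * (f + b * c)]) 0 0 * (![w0, ↑u⁻¹ * (z + b * w0)]) 1
          - (!![(↑u : ZMod m), b; c, ↑u⁻¹ * (f + b * c)]) 0 1 * (![w0, ↑u⁻¹ * (z + b * w0)]) 0 = z := by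
        simp [Units.mul_inv_cancel_left]
      rw [show (!![(↑u : ZMod m), b; c, ↑u⁻¹ * (f + b * c)] : Matrix (Fin 2) (Fin 2) (ZMod m)).det = f from hdet]
      rw [hc0]
      exact hq
  · rintro ⟨u, b, c, w0, ⟨⟨f, z⟩, hq⟩⟩ ⟨u', b', c', w0', ⟨⟨f', z'⟩, hq'⟩⟩ heq
    simp only [Subtype.mk.injEq, Prod.mk.injEq] at heq
    obtain ⟨hw, hN⟩ := heq
    have e00 : (↑u : ZMod m) = ↑u' := by
      have := congrFun (congrFun hN 0) 0; simpa using this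
    have hu : u = u' := Units.ext e00
    have eb : b = b' := by have := congrFun (congrFun hN 0) 1; simpa using this
    have ec : c = c' := by have := congrFun (congrFun hN 1) 0; simpa using this
    have ew0 : w0 = w0' := by have := congrFun hw 0; simpa using this
    have ef : f = f' := by
      have := congrFun (congrFun hN 1) 1
      simp only [Matrix.cons_val', Matrix.cons_val_zero, Matrix.cons_val_one, Matrix.head_cons,
        Matrix.head_fin_const, Matrix.of_apply, Matrix.empty_val'] at this
      rw [hu, eb, ec] at this
      have := (Units.mul_right_inj u'⁻¹).mp this
      exact add_right_cancel this
    have ez : z = z' := by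
      have := congrFun hw 1
      simp only [Matrix.cons_val_one, Matrix.head_cons] at this
      rw [hu, eb, ew0] at this
      have := (Units.mul_right_inj u'⁻¹).mp this
      exact add_right_cancel this
    subst hu eb ec ew0 ef ez
    rfl
  · rintro ⟨⟨w, N⟩, hu, hex⟩
    have hdvd := (exists_iff_unit_row0 N w (Or.inl hu)).mp hex
    refine ⟨⟨hu.unit, N 0 1, N 1 0, w 0, ⟨⟨N.det, N 0 0 * w 1 - N 0 1 * w 0⟩, hdvd⟩⟩, ?_⟩
    have hspec : (↑hu.unit : ZMod m) = N 0 0 := hu.unit_spec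
    refine Subtype.ext (Prod.ext ?_ ?_)
    · funext k
      fin_cases k
      · simp
      · show ↑hu.unit⁻¹ * (N 0 0 * w 1 - N 0 1 * w 0 + N 0 1 * w 0) = w 1
        rw [sub_add_cancel, ← hspec, Units.inv_mul_cancel_left]
    · ext i k
      fin_cases i <;> fin_cases k
      · show (↑hu.unit : ZMod m) = N 0 0; exact hspec
      · show N 0 1 = N 0 1; rfl
      · show N 1 0 = N 1 0; rfl
      · show ↑hu.unit⁻¹ * (N.det + N 0 1 * N 1 0) = N 1 1
        rw [Matrix.det_fin_two, sub_add_cancel, ← hspec, Units.inv_mul_cancel_left]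



lemma card_case2 (m : ℕ) :
    Nat.card {p : (Fin 2 → ZMod m) × Matrix (Fin 2) (Fin 2) (ZMod m) //
      ¬ IsUnit (p.2 0 0) ∧ IsUnit (p.2 0 1) ∧ ∃ x, x ᵥ* p.2 = p.1}
    = Nat.card ({a : ZMod m // ¬ IsUnit a} × (ZMod m)ˣ × ZMod m × ZMod m × Pset m) := by
  refine (Nat.card_eq_of_bijective ?_ ⟨?_, ?_⟩).symm
  · rintro ⟨⟨a, ha⟩, u, d, w1, ⟨⟨f, z⟩, hq⟩⟩
    refine ⟨(![↑u⁻¹ * (a * w1 - z), w1], !![a, ↑u; ↑u⁻¹ * (a * d - f), d]), ?_, ?_, ?_⟩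
    · simpa using ha
    · simpa using u.isUnit
    · rw [exists_iff_unit_row0 _ _ (Or.inr (by simpa using u.isUnit))]
      have hdet : Matrix.det !![a, (↑u : ZMod m); ↑u⁻¹ * (a * d - f), d] = f := by
        rw [Matrix.det_fin_two_of, Units.mul_inv_cancel_left]; ring
      rw [show (!![a, (↑u : ZMod m); ↑u⁻¹ * (a * d - f), d] : Matrix (Fin 2) (Fin 2) (ZMod m)).det = f from hdet]
      have hc0 : (!![a, (↑u : ZMod m); ↑u⁻¹ * (a * d - f), d]) 0 0 * (![↑u⁻¹ * (a * w1 - z), w1]) 1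
          - (!![a, (↑u : ZMod m); ↑u⁻¹ * (a * d - f), d]) 0 1 * (![↑u⁻¹ * (a * w1 - z), w1]) 0 = z := by
        simp [Units.mul_inv_cancel_left]
      rw [hc0]
      exact hq
  · rintro ⟨⟨a, ha⟩, u, d, w1, ⟨⟨f, z⟩, hq⟩⟩ ⟨⟨a', ha'⟩, u', d', w1', ⟨⟨f', z'⟩, hq'⟩⟩ heq
    simp only [Subtype.mk.injEq, Prod.mk.injEq] at heq
    obtain ⟨hw, hN⟩ := heq
    have ea : a = a' := by have := congrFun (congrFun hN 0) 0; simpa using this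
    have eu : u = u' := Units.ext (by have := congrFun (congrFun hN 0) 1; simpa using this)
    have ed : d = d' := by have := congrFun (congrFun hN 1) 1; simpa using this
    have ew1 : w1 = w1' := by have := congrFun hw 1; simpa using this
    have ef : f = f' := by
      have := congrFun (congrFun hN 1) 0
      simp only [Matrix.cons_val', Matrix.cons_val_zero, Matrix.cons_val_one, Matrix.head_cons,
        Matrix.head_fin_const, Matrix.of_apply, Matrix.empty_val'] at this
      rw [eu, ea, ed] at this
      have := (Units.mul_right_inj u'⁻¹).mp this
      exact sub_right_injective this
    have ez : z = z' := by
      have := congrFun hw 0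
      simp only [Matrix.cons_val_zero] at this
      rw [eu, ea, ew1] at this
      have := (Units.mul_right_inj u'⁻¹).mp this
      exact sub_right_injective this
    subst ea eu ed ew1 ef ez
    rfl
  · rintro ⟨⟨w, N⟩, ha, hu, hex⟩
    have hdvd := (exists_iff_unit_row0 N w (Or.inr hu)).mp hex
    refine ⟨⟨⟨N 0 0, ha⟩, hu.unit, N 1 1, w 1, ⟨⟨N.det, N 0 0 * w 1 - N 0 1 * w 0⟩, hdvd⟩⟩, ?_⟩
    have hspec : (↑hu.unit : ZMod m) = N 0 1 := hu.unit_spec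
    refine Subtype.ext (Prod.ext ?_ ?_)
    · funext k
      fin_cases k
      · show ↑hu.unit⁻¹ * (N 0 0 * w 1 - (N 0 0 * w 1 - N 0 1 * w 0)) = w 0
        rw [sub_sub_cancel, ← hspec, Units.inv_mul_cancel_left]
      · simp
    · ext i k
      fin_cases i <;> fin_cases k
      · show N 0 0 = N 0 0; rfl
      · show (↑hu.unit : ZMod m) = N 0 1; exact hspec
      · show ↑hu.unit⁻¹ * (N 0 0 * N 1 1 - N.det) = N 1 0
        rw [Matrix.det_fin_two, sub_sub_cancel, ← hspec, Units.inv_mul_cancel_left]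
      · show N 1 1 = N 1 1; rfl

lemma card_case3 {ℓ : ℕ} (hℓ : ℓ.Prime) {j : ℕ} (hj : 1 ≤ j) :
    Nat.card {p : (Fin 2 → ZMod (ℓ ^ j)) × Matrix (Fin 2) (Fin 2) (ZMod (ℓ ^ j)) //
      ¬ IsUnit (p.2 0 0) ∧ ¬ IsUnit (p.2 0 1) ∧ IsUnit (p.2 1 0) ∧ ∃ x, x ᵥ* p.2 = p.1}
    = Nat.card ({a : ZMod (ℓ ^ j) // ¬ IsUnit a} × (ZMod (ℓ ^ j))ˣ × ZMod (ℓ ^ j)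
        × ZMod (ℓ ^ j) × Pset' (ℓ ^ j)) := by
  refine (Nat.card_eq_of_bijective ?_ ⟨?_, ?_⟩).symm
  · rintro ⟨⟨a, ha⟩, u, d, w0, ⟨⟨f, z⟩, hfu, hq⟩⟩
    refine ⟨(![w0, ↑u⁻¹ * (z + d * w0)], !![a, ↑u⁻¹ * (a * d - f); ↑u, d]), ?_, ?_, ?_, ?_⟩
    · simpa using ha
    · show ¬ IsUnit (↑u⁻¹ * (a * d - f))
      rw [not_isUnit_iff_dvd hℓ hj] at ha hfu ⊢
      exact Dvd.dvd.mul_left (dvd_sub (ha.mul_right d) hfu) _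
    · simpa using u.isUnit
    · rw [exists_iff_unit_row1 _ _ (Or.inl (by simpa using u.isUnit))]
      have hdet : Matrix.det !![a, ↑u⁻¹ * (a * d - f); (↑u : ZMod (ℓ ^ j)), d] = f := by
        rw [Matrix.det_fin_two_of]
        rw [mul_comm ((↑u⁻¹ : ZMod (ℓ ^ j)) * (a * d - f)) (↑u : ZMod (ℓ ^ j))]
        rw [Units.mul_inv_cancel_left]; ring
      rw [show (!![a, ↑u⁻¹ * (a * d - f); (↑u : ZMod (ℓ ^ j)), d] : Matrix (Fin 2) (Fin 2) (ZMod (ℓ ^ j))).det = f from hdet]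
      have hc1 : (!![a, ↑u⁻¹ * (a * d - f); (↑u : ZMod (ℓ ^ j)), d]) 1 0 * (![w0, ↑u⁻¹ * (z + d * w0)]) 1
          - (!![a, ↑u⁻¹ * (a * d - f); (↑u : ZMod (ℓ ^ j)), d]) 1 1 * (![w0, ↑u⁻¹ * (z + d * w0)]) 0 = z := by
        simp [Units.mul_inv_cancel_left]
      rw [hc1]
      exact hq
  · rintro ⟨⟨a, ha⟩, u, d, w0, ⟨⟨f, z⟩, hfu, hq⟩⟩ ⟨⟨a', ha'⟩, u', d', w0', ⟨⟨f', z'⟩, hfu', hq'⟩⟩ heq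
    simp only [Subtype.mk.injEq, Prod.mk.injEq] at heq
    obtain ⟨hw, hN⟩ := heq
    have ea : a = a' := by have := congrFun (congrFun hN 0) 0; simpa using this
    have eu : u = u' := Units.ext (by have := congrFun (congrFun hN 1) 0; simpa using this)
    have ed : d = d' := by have := congrFun (congrFun hN 1) 1; simpa using this
    have ew0 : w0 = w0' := by have := congrFun hw 0; simpa using this
    have ef : f = f' := by
      have := congrFun (congrFun hN 0) 1
      simp only [Matrix.cons_val', Matrix.cons_val_zero, Matrix.cons_val_one, Matrix.head_cons,
        Matrix.head_fin_const, Matrix.of_apply, Matrix.empty_val'] at this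
      rw [eu, ea, ed] at this
      have := (Units.mul_right_inj u'⁻¹).mp this
      exact sub_right_injective this
    have ez : z = z' := by
      have := congrFun hw 1
      simp only [Matrix.cons_val_one, Matrix.head_cons] at this
      rw [eu, ed, ew0] at this
      have := (Units.mul_right_inj u'⁻¹).mp this
      exact add_right_cancel this
    subst ea eu ed ew0 ef ez
    rfl
  · rintro ⟨⟨w, N⟩, ha, hb, hc, hex⟩
    have hdvd := (exists_iff_unit_row1 N w (Or.inl hc)).mp hex
    have hfu : ¬ IsUnit N.det := by
      rw [not_isUnit_iff_dvd hℓ hj] at ha hb ⊢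
      rw [Matrix.det_fin_two]
      exact dvd_sub (ha.mul_right _) (hb.mul_right _)
    refine ⟨⟨⟨N 0 0, ha⟩, hc.unit, N 1 1, w 0, ⟨⟨N.det, N 1 0 * w 1 - N 1 1 * w 0⟩, hfu, hdvd⟩⟩, ?_⟩
    have hspec : (↑hc.unit : ZMod (ℓ ^ j)) = N 1 0 := hc.unit_spec
    refine Subtype.ext (Prod.ext ?_ ?_)
    · funext k
      fin_cases k
      · simp
      · show ↑hc.unit⁻¹ * (N 1 0 * w 1 - N 1 1 * w 0 + N 1 1 * w 0) = w 1
        rw [sub_add_cancel, ← hspec, Units.inv_mul_cancel_left]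
    · ext i k
      fin_cases i <;> fin_cases k
      · show N 0 0 = N 0 0; rfl
      · show ↑hc.unit⁻¹ * (N 0 0 * N 1 1 - N.det) = N 0 1
        rw [Matrix.det_fin_two, sub_sub_cancel, ← hspec,
          mul_comm (N 0 1) ((↑hc.unit : ZMod (ℓ ^ j))), Units.inv_mul_cancel_left]
      · show (↑hc.unit : ZMod (ℓ ^ j)) = N 1 0; exact hspec
      · show N 1 1 = N 1 1; rfl

lemma card_case4 {ℓ : ℕ} (hℓ : ℓ.Prime) {j : ℕ} (hj : 1 ≤ j) :
    Nat.card {p : (Fin 2 → ZMod (ℓ ^ j)) × Matrix (Fin 2) (Fin 2) (ZMod (ℓ ^ j)) //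
      ¬ IsUnit (p.2 0 0) ∧ ¬ IsUnit (p.2 0 1) ∧ ¬ IsUnit (p.2 1 0) ∧ IsUnit (p.2 1 1) ∧
        ∃ x, x ᵥ* p.2 = p.1}
    = Nat.card ({b : ZMod (ℓ ^ j) // ¬ IsUnit b} × {c : ZMod (ℓ ^ j) // ¬ IsUnit c}
        × (ZMod (ℓ ^ j))ˣ × ZMod (ℓ ^ j) × Pset' (ℓ ^ j)) := by
  refine (Nat.card_eq_of_bijective ?_ ⟨?_, ?_⟩).symm
  · rintro ⟨⟨b, hb⟩, ⟨c, hc⟩, u, w1, ⟨⟨f, z⟩, hfu, hq⟩⟩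
    refine ⟨(![↑u⁻¹ * (c * w1 - z), w1], !![↑u⁻¹ * (f + b * c), b; c, ↑u]), ?_, ?_, ?_, ?_, ?_⟩
    · show ¬ IsUnit (↑u⁻¹ * (f + b * c))
      rw [not_isUnit_iff_dvd hℓ hj] at hb hfu ⊢
      exact Dvd.dvd.mul_left (dvd_add hfu (hb.mul_right c)) _
    · simpa using hb
    · simpa using hc
    · simpa using u.isUnit
    · rw [exists_iff_unit_row1 _ _ (Or.inr (by simpa using u.isUnit))]
      have hdet : Matrix.det !![↑u⁻¹ * (f + b * c), b; c, (↑u : ZMod (ℓ ^ j))] = f := by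
        rw [Matrix.det_fin_two_of]
        rw [mul_comm ((↑u⁻¹ : ZMod (ℓ ^ j)) * (f + b * c)) (↑u : ZMod (ℓ ^ j))]
        rw [Units.mul_inv_cancel_left]; ring
      rw [show (!![↑u⁻¹ * (f + b * c), b; c, (↑u : ZMod (ℓ ^ j))] : Matrix (Fin 2) (Fin 2) (ZMod (ℓ ^ j))).det = f from hdet]
      have hc1 : (!![↑u⁻¹ * (f + b * c), b; c, (↑u : ZMod (ℓ ^ j))]) 1 0 * (![↑u⁻¹ * (c * w1 - z), w1]) 1
          - (!![↑u⁻¹ * (f + b * c), b; c, (↑u : ZMod (ℓ ^ j))]) 1 1 * (![↑u⁻¹ * (c * w1 - z), w1]) 0 = z := by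
        simp [Units.mul_inv_cancel_left]
      rw [hc1]
      exact hq
  · rintro ⟨⟨b, hb⟩, ⟨c, hc⟩, u, w1, ⟨⟨f, z⟩, hfu, hq⟩⟩ ⟨⟨b', hb'⟩, ⟨c', hc'⟩, u', w1', ⟨⟨f', z'⟩, hfu', hq'⟩⟩ heq
    simp only [Subtype.mk.injEq, Prod.mk.injEq] at heq
    obtain ⟨hw, hN⟩ := heq
    have eb : b = b' := by have := congrFun (congrFun hN 0) 1; simpa using this
    have ec : c = c' := by have := congrFun (congrFun hN 1) 0; simpa using this
    have eu : u = u' := Units.ext (by have := congrFun (congrFun hN 1) 1; simpa using this)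
    have ew1 : w1 = w1' := by have := congrFun hw 1; simpa using this
    have ef : f = f' := by
      have := congrFun (congrFun hN 0) 0
      simp only [Matrix.cons_val', Matrix.cons_val_zero, Matrix.cons_val_one, Matrix.head_cons,
        Matrix.head_fin_const, Matrix.of_apply, Matrix.empty_val'] at this
      rw [eu, eb, ec] at this
      have := (Units.mul_right_inj u'⁻¹).mp this
      exact add_right_cancel this
    have ez : z = z' := by
      have := congrFun hw 0
      simp only [Matrix.cons_val_zero] at this
      rw [eu, ec, ew1] at this
      have := (Units.mul_right_inj u'⁻¹).mp this
      exact sub_right_injective this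
    subst eb ec eu ew1 ef ez
    rfl
  · rintro ⟨⟨w, N⟩, ha, hb, hc, hd, hex⟩
    have hdvd := (exists_iff_unit_row1 N w (Or.inr hd)).mp hex
    have hfu : ¬ IsUnit N.det := by
      rw [not_isUnit_iff_dvd hℓ hj] at ha hb ⊢
      rw [Matrix.det_fin_two]
      exact dvd_sub (ha.mul_right _) (hb.mul_right _)
    refine ⟨⟨⟨N 0 1, hb⟩, ⟨N 1 0, hc⟩, hd.unit, w 1, ⟨⟨N.det, N 1 0 * w 1 - N 1 1 * w 0⟩, hfu, hdvd⟩⟩, ?_⟩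
    have hspec : (↑hd.unit : ZMod (ℓ ^ j)) = N 1 1 := hd.unit_spec
    refine Subtype.ext (Prod.ext ?_ ?_)
    · funext k
      fin_cases k
      · show ↑hd.unit⁻¹ * (N 1 0 * w 1 - (N 1 0 * w 1 - N 1 1 * w 0)) = w 0
        rw [sub_sub_cancel, ← hspec, Units.inv_mul_cancel_left]
      · simp
    · ext i k
      fin_cases i <;> fin_cases k
      · show ↑hd.unit⁻¹ * (N.det + N 0 1 * N 1 0) = N 0 0
        rw [Matrix.det_fin_two, sub_add_cancel, ← hspec,
          mul_comm (N 0 0) ((↑hd.unit : ZMod (ℓ ^ j))), Units.inv_mul_cancel_left]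
      · show N 0 1 = N 0 1; rfl
      · show N 1 0 = N 1 0; rfl
      · show (↑hd.unit : ZMod (ℓ ^ j)) = N 1 1; exact hspec

end CASES

section COUNTS
variable {ℓ : ℕ}

lemma card_split {α : Type*} [Finite α] (Q A : α → Prop) :
    Nat.card {x // Q x} = Nat.card {x // A x ∧ Q x} + Nat.card {x // ¬ A x ∧ Q x} := by
  classical
  rw [← Nat.card_sum]
  refine Nat.card_congr ?_
  calc {x // Q x} ≃ {y : {x // Q x} // A y.1} ⊕ {y : {x // Q x} // ¬ A y.1} :=
        (Equiv.sumCompl _).symm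
    _ ≃ {x // A x ∧ Q x} ⊕ {x // ¬ A x ∧ Q x} := by
        refine Equiv.sumCongr ?_ ?_
        · exact (Equiv.subtypeSubtypeEquivSubtypeInter Q A).trans
            (Equiv.subtypeEquivRight (fun x => by tauto))
        · exact (Equiv.subtypeSubtypeEquivSubtypeInter Q (fun x => ¬ A x)).trans
            (Equiv.subtypeEquivRight (fun x => by tauto))

variable (hℓ : ℓ.Prime)
include hℓ

lemma card_units_pow {j : ℕ} (hj : 1 ≤ j) :
    Nat.card (ZMod (ℓ ^ j))ˣ = ℓ ^ (j - 1) * (ℓ - 1) := by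
  haveI := pow_neZero hℓ j
  rw [Nat.card_eq_fintype_card, ZMod.card_units_eq_totient, Nat.totient_prime_pow hℓ (by omega)]

lemma card_nonunits (j : ℕ) :
    Nat.card {a : ZMod (ℓ ^ (1 + j)) // ¬ IsUnit a} = ℓ ^ j := by
  haveI := pow_neZero hℓ j
  have : Nat.card (ZMod (ℓ ^ j)) = Nat.card {a : ZMod (ℓ ^ (1 + j)) // ¬ IsUnit a} := by
    refine Nat.card_eq_of_bijective (fun a => ⟨phi ℓ 1 j a, ?_⟩) ⟨?_, ?_⟩
    · rw [not_isUnit_iff_dvd hℓ (by omega)]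
      have := (phi_image hℓ 1 j (phi ℓ 1 j a)).mpr ⟨a, rfl⟩
      rwa [pow_one] at this
    · intro a b hab
      exact phi_injective hℓ 1 j (congrArg Subtype.val hab)
    · rintro ⟨y, hy⟩
      rw [not_isUnit_iff_dvd hℓ (by omega)] at hy
      obtain ⟨a, ha⟩ := (phi_image hℓ 1 j y).mp (by rwa [pow_one])
      exact ⟨a, Subtype.ext ha⟩
  rw [← this, Nat.card_zmod]

lemma phi_dvd_iff (r j : ℕ) (a b : ZMod (ℓ ^ j)) :
    phi ℓ r j a ∣ phi ℓ r j b ↔ a ∣ b := by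
  haveI := pow_neZero hℓ j
  constructor
  · rintro ⟨Y, hY⟩
    rw [mul_comm, mul_phi hℓ] at hY
    exact ⟨rho ℓ r j Y, by rw [mul_comm]; exact phi_injective hℓ r j hY⟩
  · rintro ⟨c, rfl⟩
    refine ⟨((c.val : ℕ) : ZMod (ℓ ^ (r + j))), ?_⟩
    have h := mul_phi hℓ r j ((c.val : ℕ) : ZMod (ℓ ^ (r + j))) a
    rw [rho_natCast_val hℓ] at h
    rw [mul_comm a c, ← h, mul_comm]

lemma card_Pset'_eq (j : ℕ) :
    Nat.card (Pset' (ℓ ^ (1 + j))) = Nat.card (Pset (ℓ ^ j)) := by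
  refine (Nat.card_eq_of_bijective ?_ ⟨?_, ?_⟩).symm
  · rintro ⟨⟨f, z⟩, hq⟩
    refine ⟨⟨phi ℓ 1 j f, phi ℓ 1 j z⟩, ?_, ?_⟩
    · rw [not_isUnit_iff_dvd hℓ (by omega)]
      have := (phi_image hℓ 1 j (phi ℓ 1 j f)).mpr ⟨f, rfl⟩
      rwa [pow_one] at this
    · exact (phi_dvd_iff hℓ 1 j f z).mpr hq
  · rintro ⟨⟨f, z⟩, hq⟩ ⟨⟨f', z'⟩, hq'⟩ heq
    simp only [Subtype.mk.injEq, Prod.mk.injEq] at heq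
    exact Subtype.ext (Prod.ext (phi_injective hℓ 1 j heq.1) (phi_injective hℓ 1 j heq.2))
  · rintro ⟨⟨f, z⟩, hfu, hq⟩
    rw [not_isUnit_iff_dvd hℓ (by omega)] at hfu
    obtain ⟨f', hf⟩ := (phi_image hℓ 1 j f).mp (by rwa [pow_one])
    obtain ⟨z', hz⟩ := (phi_image hℓ 1 j z).mp (by rw [pow_one]; exact hfu.trans hq)
    refine ⟨⟨⟨f', z'⟩, ?_⟩, ?_⟩
    · rw [← phi_dvd_iff hℓ 1 j, hf, hz]; exact hq
    · exact Subtype.ext (Prod.ext hf hz)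

omit hℓ in
lemma card_Pset_unit (m : ℕ) :
    Nat.card {q : ZMod m × ZMod m // IsUnit q.1 ∧ q.1 ∣ q.2}
      = Nat.card ((ZMod m)ˣ × ZMod m) := by
  refine (Nat.card_eq_of_bijective ?_ ⟨?_, ?_⟩).symm
  · rintro ⟨u, z⟩
    exact ⟨⟨↑u, z⟩, u.isUnit, ⟨↑u⁻¹ * z, (u.mul_inv_cancel_left z).symm⟩⟩
  · rintro ⟨u, z⟩ ⟨u', z'⟩ heq
    simp only [Subtype.mk.injEq, Prod.mk.injEq] at heq
    exact Prod.ext (Units.ext heq.1) heq.2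
  · rintro ⟨⟨e, z⟩, he, hd⟩
    exact ⟨⟨he.unit, z⟩, Subtype.ext (Prod.ext he.unit_spec rfl)⟩

lemma card_Pset_succ (j : ℕ) :
    Nat.card (Pset (ℓ ^ (1 + j))) = ℓ ^ j * (ℓ - 1) * ℓ ^ (1 + j) + Nat.card (Pset (ℓ ^ j)) := by
  haveI := pow_neZero hℓ (1 + j)
  have h1 := card_split (α := ZMod (ℓ ^ (1 + j)) × ZMod (ℓ ^ (1 + j)))
    (fun q => q.1 ∣ q.2) (fun q => IsUnit q.1)
  have h2 : Nat.card (Pset (ℓ ^ (1 + j))) =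
      Nat.card {q : ZMod (ℓ ^ (1 + j)) × ZMod (ℓ ^ (1 + j)) // q.1 ∣ q.2} := rfl
  have h3 : Nat.card (Pset' (ℓ ^ (1 + j))) =
      Nat.card {q : ZMod (ℓ ^ (1 + j)) × ZMod (ℓ ^ (1 + j)) // ¬ IsUnit q.1 ∧ q.1 ∣ q.2} := rfl
  rw [h2, h1, card_Pset_unit, Nat.card_prod, Nat.card_zmod,
    card_units_pow hℓ (by omega : 1 ≤ 1 + j), ← h3, card_Pset'_eq hℓ j]
  congr 1
  simp [Nat.add_sub_cancel]

omit hℓ in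
lemma card_Pset_zero : Nat.card (Pset (1 : ℕ)) = 1 := by
  rw [Nat.card_eq_one_iff_unique]
  constructor
  · constructor
    rintro ⟨q, hq⟩ ⟨q', hq'⟩
    exact Subtype.ext (Subsingleton.elim q q')
  · exact ⟨⟨(0, 0), dvd_refl 0⟩⟩

omit hℓ in
lemma pairCount_zero' : pairCount ℓ 0 = 1 := by
  rw [pairCount, Nat.card_eq_one_iff_unique]
  haveI : Subsingleton (ZMod (ℓ ^ 0)) := by rw [pow_zero]; infer_instance
  constructor
  · constructor
    rintro ⟨p, hp⟩ ⟨p', hp'⟩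
    refine Subtype.ext (Prod.ext (funext fun k => Subsingleton.elim _ _) ?_)
    ext i k
    exact Subsingleton.elim _ _
  · exact ⟨⟨(fun _ => 0, 0), ⟨fun _ => 0, funext fun k => Subsingleton.elim _ _⟩⟩⟩

end COUNTS

section RECUR
variable {ℓ : ℕ} (hℓ : ℓ.Prime)
include hℓ

lemma pairCount_succ (j : ℕ) :
    pairCount ℓ (1 + j) =
      (ℓ - 1) * ℓ ^ j * ℓ ^ (1 + j) * ℓ ^ (1 + j) * ℓ ^ (1 + j) * Nat.card (Pset (ℓ ^ (1 + j)))
      + (ℓ - 1) * ℓ ^ j * ℓ ^ j * ℓ ^ (1 + j) * ℓ ^ (1 + j) * Nat.card (Pset (ℓ ^ (1 + j)))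
      + (ℓ - 1) * ℓ ^ j * ℓ ^ j * ℓ ^ (1 + j) * ℓ ^ (1 + j) * Nat.card (Pset (ℓ ^ j))
      + (ℓ - 1) * ℓ ^ j * ℓ ^ j * ℓ ^ j * ℓ ^ (1 + j) * Nat.card (Pset (ℓ ^ j))
      + pairCount ℓ j := by
  haveI := pow_neZero hℓ (1 + j)
  have hj1 : 1 ≤ 1 + j := by omega
  set n := ℓ ^ (1 + j) with hn
  set Q : (Fin 2 → ZMod n) × Matrix (Fin 2) (Fin 2) (ZMod n) → Prop :=
    fun p => ∃ x, x ᵥ* p.2 = p.1 with hQ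
  have e1 := card_split Q (fun p => IsUnit (p.2 0 0))
  have e2 := card_split (fun p => ¬ IsUnit (p.2 0 0) ∧ Q p) (fun p => IsUnit (p.2 0 1))
  have e3 := card_split (fun p => ¬ IsUnit (p.2 0 1) ∧ (¬ IsUnit (p.2 0 0) ∧ Q p))
    (fun p => IsUnit (p.2 1 0))
  have e4 := card_split
    (fun p => ¬ IsUnit (p.2 1 0) ∧ (¬ IsUnit (p.2 0 1) ∧ (¬ IsUnit (p.2 0 0) ∧ Q p)))
    (fun p => IsUnit (p.2 1 1))
  -- reorderings
  have r2 : Nat.card {p : (Fin 2 → ZMod n) × Matrix (Fin 2) (Fin 2) (ZMod n) //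
      IsUnit (p.2 0 1) ∧ (¬ IsUnit (p.2 0 0) ∧ Q p)}
      = Nat.card {p : (Fin 2 → ZMod n) × Matrix (Fin 2) (Fin 2) (ZMod n) //
      ¬ IsUnit (p.2 0 0) ∧ IsUnit (p.2 0 1) ∧ Q p} :=
    Nat.card_congr (Equiv.subtypeEquivRight (fun p => by tauto))
  have r3 : Nat.card {p : (Fin 2 → ZMod n) × Matrix (Fin 2) (Fin 2) (ZMod n) //
      IsUnit (p.2 1 0) ∧ (¬ IsUnit (p.2 0 1) ∧ (¬ IsUnit (p.2 0 0) ∧ Q p))}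
      = Nat.card {p : (Fin 2 → ZMod n) × Matrix (Fin 2) (Fin 2) (ZMod n) //
      ¬ IsUnit (p.2 0 0) ∧ ¬ IsUnit (p.2 0 1) ∧ IsUnit (p.2 1 0) ∧ Q p} :=
    Nat.card_congr (Equiv.subtypeEquivRight (fun p => by tauto))
  have r4 : Nat.card {p : (Fin 2 → ZMod n) × Matrix (Fin 2) (Fin 2) (ZMod n) //
      IsUnit (p.2 1 1) ∧ (¬ IsUnit (p.2 1 0) ∧ (¬ IsUnit (p.2 0 1) ∧ (¬ IsUnit (p.2 0 0) ∧ Q p)))}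
      = Nat.card {p : (Fin 2 → ZMod n) × Matrix (Fin 2) (Fin 2) (ZMod n) //
      ¬ IsUnit (p.2 0 0) ∧ ¬ IsUnit (p.2 0 1) ∧ ¬ IsUnit (p.2 1 0) ∧ IsUnit (p.2 1 1) ∧ Q p} :=
    Nat.card_congr (Equiv.subtypeEquivRight (fun p => by tauto))
  have r5 : Nat.card {p : (Fin 2 → ZMod n) × Matrix (Fin 2) (Fin 2) (ZMod n) //
      ¬ IsUnit (p.2 1 1) ∧ (¬ IsUnit (p.2 1 0) ∧ (¬ IsUnit (p.2 0 1) ∧ (¬ IsUnit (p.2 0 0) ∧ Q p)))}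
      = pairCount ℓ j := by
    rw [← scale_card hℓ 1 j]
    refine Nat.card_congr (Equiv.subtypeEquivRight (fun p => ?_))
    constructor
    · rintro ⟨h11, h10, h01, h00, hQp⟩
      refine ⟨fun i k => ?_, hQp⟩
      rw [pow_one, ← not_isUnit_iff_dvd hℓ hj1]
      fin_cases i <;> fin_cases k <;> assumption
    · rintro ⟨hdvd, hQp⟩
      have hnu : ∀ i k, ¬ IsUnit (p.2 i k) := fun i k => by
        rw [not_isUnit_iff_dvd hℓ hj1]
        have := hdvd i k; rwa [pow_one] at this
      exact ⟨hnu 1 1, hnu 1 0, hnu 0 1, hnu 0 0, hQp⟩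
  have hpc : pairCount ℓ (1 + j) = Nat.card {p : (Fin 2 → ZMod n) × Matrix (Fin 2) (Fin 2) (ZMod n) // Q p} := rfl
  rw [hpc, e1, e2, r2, e3, r3, e4, r4, r5, card_case1, card_case2, card_case3 hℓ hj1, card_case4 hℓ hj1]
  have hU : Nat.card ((ZMod n)ˣ) = ℓ ^ j * (ℓ - 1) := by
    rw [hn, card_units_pow hℓ hj1, show 1 + j - 1 = j from by omega]
  have hA : Nat.card {a : ZMod n // ¬ IsUnit a} = ℓ ^ j := card_nonunits hℓ j
  have hP' : Nat.card (Pset' n) = Nat.card (Pset (ℓ ^ j)) := card_Pset'_eq hℓ j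
  simp only [Nat.card_prod, Nat.card_zmod, hU, hA, hP', card_units_pow hℓ hj1,
    Nat.add_sub_cancel_left, card_nonunits hℓ j, card_Pset'_eq hℓ j]
  rw [hn]
  ring
end RECUR

section PARTC
variable {ℓ : ℕ} (hℓ : ℓ.Prime)
include hℓ

lemma liftCount_eq (r j : ℕ) :
    liftCount ℓ r (r + j) (Nat.le_add_right r j)
      (0 : Fin 2 → ZMod (ℓ ^ r)) (1 : Matrix (Fin 2) (Fin 2) (ZMod (ℓ ^ r)))
    = pairCount ℓ j := by
  haveI := pow_neZero hℓ (r + j)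
  haveI := pow_neZero hℓ r
  rw [liftCount, ← scale_card hℓ r j]
  have hone : ∀ i k, pi' ℓ r j ((1 : Matrix (Fin 2) (Fin 2) (ZMod (ℓ ^ (r + j)))) i k)
      = (1 : Matrix (Fin 2) (Fin 2) (ZMod (ℓ ^ r))) i k := by
    intro i k
    rw [Matrix.one_apply, Matrix.one_apply]
    split <;> simp
  refine (Nat.card_eq_of_bijective ?_ ⟨?_, ?_⟩).symm
  · rintro ⟨⟨v, A⟩, hda⟩
    refine ⟨⟨v, A + 1⟩, ?_, ?_, ?_⟩
    · intro i
      show pi' ℓ r j (v i) = 0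
      obtain ⟨hdvd, x, hx⟩ := hda
      dsimp only at hdvd hx
      have hv : v i = ∑ k, x k * A k i := by
        rw [← hx, Matrix.vecMul, dotProduct]
      rw [hv, map_sum, Fin.sum_univ_two, map_mul (pi' ℓ r j) (x 0) (A 0 i),
        map_mul (pi' ℓ r j) (x 1) (A 1 i)]
      have h0 : ∀ k, pi' ℓ r j (A k i) = 0 :=
        fun k => (pi'_eq_zero_iff hℓ r j _).mpr (hdvd k i)
      rw [h0 0, h0 1, mul_zero, mul_zero, add_zero]
    · show (A + 1).map (pi' ℓ r j) = 1
      obtain ⟨hdvd, -⟩ := hda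
      dsimp only at hdvd
      ext i k
      rw [Matrix.map_apply, Matrix.add_apply, map_add, hone,
        (pi'_eq_zero_iff hℓ r j _).mpr (hdvd i k), zero_add]
    · obtain ⟨-, x, hx⟩ := hda
      dsimp only at hx
      exact ⟨x, by show x ᵥ* (A + 1 - 1) = v; rwa [add_sub_cancel_right]⟩
  · rintro ⟨⟨v, A⟩, h⟩ ⟨⟨v', A'⟩, h'⟩ heq
    simp only [Subtype.mk.injEq, Prod.mk.injEq] at heq
    exact Subtype.ext (Prod.ext heq.1 (by have := heq.2; exact add_right_cancel this))
  · rintro ⟨⟨v, M⟩, hv, hM, hex⟩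
    dsimp only at hv hM hex
    refine ⟨⟨⟨v, M - 1⟩, ?_, hex⟩, ?_⟩
    · intro i k
      show (ℓ : ZMod (ℓ ^ (r + j))) ^ r ∣ (M - 1) i k
      rw [← pi'_eq_zero_iff hℓ r j]
      rw [Matrix.sub_apply, map_sub, hone]
      have h2 : pi' ℓ r j (M i k) = (1 : Matrix (Fin 2) (Fin 2) (ZMod (ℓ ^ r))) i k := by
        have := congrFun (congrFun hM i) k
        rwa [Matrix.map_apply] at this
      rw [h2, sub_self]
    · refine Subtype.ext (Prod.ext rfl ?_)
      show M - 1 + 1 = M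
      rw [sub_add_cancel]
end PARTC

section NUM
variable {ℓ : ℕ} (hℓ : ℓ.Prime)
include hℓ

lemma Pc_real (j : ℕ) :
    (Nat.card (Pset (ℓ ^ j)) : ℝ) = ((ℓ : ℝ) ^ (2 * j + 1) + 1) / ((ℓ : ℝ) + 1) := by
  have hl1 : (1 : ℝ) ≤ (ℓ : ℝ) := by exact_mod_cast hℓ.one_lt.le
  have hne : (ℓ : ℝ) + 1 ≠ 0 := by positivity
  induction j with
  | zero =>
    rw [pow_zero, card_Pset_zero]
    rw [mul_zero, zero_add, pow_one]
    field_simp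
    norm_num
  | succ n ih =>
    rw [show n + 1 = 1 + n from Nat.add_comm n 1, card_Pset_succ hℓ n]
    push_cast [Nat.cast_sub hℓ.one_lt.le]
    rw [ih]
    field_simp
    ring
lemma pairCount_real (j : ℕ) :
    (pairCount ℓ j : ℝ) =
      (ℓ : ℝ) ^ 2 * ((ℓ : ℝ) ^ (6 * j) - 1) / ((ℓ : ℝ) ^ 2 + (ℓ : ℝ) + 1)
      + (ℓ : ℝ) * ((ℓ : ℝ) ^ (4 * j) - 1) / ((ℓ : ℝ) ^ 2 + 1) + 1 := by
  have hl1 : (1 : ℝ) ≤ (ℓ : ℝ) := by exact_mod_cast hℓ.one_lt.le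
  have hd1 : (ℓ : ℝ) ^ 2 + (ℓ : ℝ) + 1 ≠ 0 := by positivity
  have hd2 : (ℓ : ℝ) ^ 2 + 1 ≠ 0 := by positivity
  have hd3 : (ℓ : ℝ) + 1 ≠ 0 := by positivity
  induction j with
  | zero =>
    rw [pairCount_zero']
    norm_num
  | succ n ih =>
    rw [show n + 1 = 1 + n from Nat.add_comm n 1, pairCount_succ hℓ n]
    push_cast [Nat.cast_sub hℓ.one_lt.le]
    rw [ih, Pc_real hℓ n, Pc_real hℓ (1 + n)]
    field_simp
    ring
end NUM
end LCP


/-- For `v₀ = 0` and `M₀ = I` over `ℤ/ℓ^rℤ`, the sequence `N_k(0, I)/ℓ^(6(k-r))`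
converges (as `k = r + j → ∞`) to `ℓ²/(ℓ² + ℓ + 1)`. -/
theorem stmt_8 (ℓ : ℕ) (hℓ : ℓ.Prime) (r : ℕ) (hr : 1 ≤ r) :
    Tendsto
      (fun j : ℕ =>
        (liftCount ℓ r (r + j) (Nat.le_add_right r j)
          (0 : Fin 2 → ZMod (ℓ ^ r)) (1 : Matrix (Fin 2) (Fin 2) (ZMod (ℓ ^ r))) : ℝ)
          / (ℓ : ℝ) ^ (6 * j))
      atTop (𝓝 ((ℓ : ℝ) ^ 2 / ((ℓ : ℝ) ^ 2 + (ℓ : ℝ) + 1))) := by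
  have hl1 : (1 : ℝ) < (ℓ : ℝ) := by exact_mod_cast hℓ.one_lt
  have hlpos : (0 : ℝ) < (ℓ : ℝ) := by linarith
  have hd1 : (ℓ : ℝ) ^ 2 + (ℓ : ℝ) + 1 ≠ 0 := by positivity
  have hd2 : (ℓ : ℝ) ^ 2 + 1 ≠ 0 := by positivity
  set A : ℝ := (ℓ : ℝ) ^ 2 / ((ℓ : ℝ) ^ 2 + (ℓ : ℝ) + 1) with hA
  set B : ℝ := 1 - (ℓ : ℝ) ^ 2 / ((ℓ : ℝ) ^ 2 + (ℓ : ℝ) + 1) - (ℓ : ℝ) / ((ℓ : ℝ) ^ 2 + 1) with hB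
  set C : ℝ := (ℓ : ℝ) / ((ℓ : ℝ) ^ 2 + 1) with hC
  have hfun : (fun j : ℕ =>
      (liftCount ℓ r (r + j) (Nat.le_add_right r j)
        (0 : Fin 2 → ZMod (ℓ ^ r)) (1 : Matrix (Fin 2) (Fin 2) (ZMod (ℓ ^ r))) : ℝ)
        / (ℓ : ℝ) ^ (6 * j))
      = fun j : ℕ => A + (B * (1 / (ℓ : ℝ) ^ 6) ^ j + C * (1 / (ℓ : ℝ) ^ 2) ^ j) := by
    funext j
    rw [LCP.liftCount_eq hℓ r j, LCP.pairCount_real hℓ j, hA, hB, hC]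
    have hp6 : (ℓ : ℝ) ^ (6 * j) = ((ℓ : ℝ) ^ 6) ^ j := by rw [pow_mul]
    have hp4 : (ℓ : ℝ) ^ (4 * j) = ((ℓ : ℝ) ^ 4) ^ j := by rw [pow_mul]
    have hne6 : ((ℓ : ℝ) ^ 6 : ℝ) ^ j ≠ 0 := by positivity
    have hne2 : ((ℓ : ℝ) ^ 2 : ℝ) ^ j ≠ 0 := by positivity
    rw [hp6, hp4, div_pow, div_pow]
    field_simp
    ring
  rw [hfun]
  have h6 : Filter.Tendsto (fun j : ℕ => (1 / (ℓ : ℝ) ^ 6) ^ j) Filter.atTop (nhds 0) := by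
    refine tendsto_pow_atTop_nhds_zero_of_lt_one (by positivity) ?_
    rw [div_lt_one (by positivity)]
    calc (1 : ℝ) = 1 ^ 6 := by norm_num
      _ < (ℓ : ℝ) ^ 6 := by gcongr <;> simp [hl1, hl1.le]
  have h2 : Filter.Tendsto (fun j : ℕ => (1 / (ℓ : ℝ) ^ 2) ^ j) Filter.atTop (nhds 0) := by
    refine tendsto_pow_atTop_nhds_zero_of_lt_one (by positivity) ?_
    rw [div_lt_one (by positivity)]
    calc (1 : ℝ) = 1 ^ 2 := by norm_num
      _ < (ℓ : ℝ) ^ 2 := by gcongr <;> simp [hl1, hl1.le]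
  have := Filter.Tendsto.add (tendsto_const_nhds (x := A))
    (Filter.Tendsto.add (h6.const_mul B) (h2.const_mul C))
  simpa using this
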